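/- Let G be an edge-colored complete graph with no monochromatic copy of S_t^r, whose vertex set is partitioned into parts H_1, ..., H_m, each of order at most t - 1, such that all edges between distinct parts are red. Then the total number of vertices of G is at most 2t + r - 1. -/

import Mathlib

/-- `SGraph t r` is the graph `S_t^r`: a star `K_{1,t-1}` with center `0`
together with `r` independent edges `(1,2), (3,4), …, (2r-1,2r)` among the leaves. -/
def SGraph (t r : ℕ) : SimpleGraph (Fin t) :=
  SimpleGraph.fromRel fun a b =>
    a.val = 0 ∨ (b.val = a.val + 1 ∧ a.val % 2 = 1 ∧ b.val ≤ 2 * r)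

/-- A monochromatic copy of `H` in the edge-coloring `c` of the complete graph on `V`. -/
def HasMonoCopy {α V C : Type*} (H : SimpleGraph α) (c : Sym2 V → C) : Prop :=
  ∃ (f : α ↪ V) (col : C), ∀ a b : α, H.Adj a b → c s(f a, f b) = col

/-- A copy of `H` in the edge-coloring `c` all of whose edges get color `col`. -/
def HasMonoCopyCol {α V C : Type*} (H : SimpleGraph α) (c : Sym2 V → C) (col : C) : Prop :=
  ∃ f : α ↪ V, ∀ a b : α, H.Adj a b → c s(f a, f b) = col

/-- A rainbow triangle in the edge-coloring `c` of the complete graph on `V`. -/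
def HasRainbowTriangle {V C : Type*} (c : Sym2 V → C) : Prop :=
  ∃ x y z : V,
    c s(x, y) ≠ c s(y, z) ∧ c s(y, z) ≠ c s(x, z) ∧ c s(x, y) ≠ c s(x, z)


/-- Key lemma: in a list sorted by part, elements at distance ≥ s (the max part size)
lie in different parts. -/
lemma sorted_parts_ne {V : Type*} [Finite V] {m : ℕ} (P : V → Fin m) (L : List V)
    (hs : L.Pairwise fun u v => (P u : ℕ) ≤ (P v : ℕ)) (hnd : L.Nodup)
    (s : ℕ) (hsize : ∀ i : Fin m, Set.ncard {v : V | P v = i} ≤ s)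
    {i j : ℕ} (hi : i < L.length) (hj : j < L.length) (hij : i + s ≤ j) :
    P (L.get ⟨i, hi⟩) ≠ P (L.get ⟨j, hj⟩) := by
  classical
  intro heq
  have hmono : ∀ (i1 i2 : ℕ) (h1 : i1 < L.length) (h2 : i2 < L.length), i1 ≤ i2 →
      (P (L.get ⟨i1, h1⟩) : ℕ) ≤ (P (L.get ⟨i2, h2⟩) : ℕ) := by
    intro i1 i2 h1 h2 hle
    rcases eq_or_lt_of_le hle with h | h
    · subst h; simp
    · exact List.Pairwise.rel_get_of_lt hs (by simpa using h)
  -- all elements between i and j have the same part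
  have hall : ∀ k : Fin (s+1), P (L.get ⟨i + k.val, by omega⟩) = P (L.get ⟨i, hi⟩) := by
    intro k
    have hk := k.isLt
    have h1 := hmono i (i + k.val) hi (by omega) (by omega)
    have h2 := hmono (i + k.val) j (by omega) hj (by omega)
    rw [← heq] at h2
    exact Fin.ext (le_antisymm (by omega) h1)
  set F : Finset V := Finset.image (fun k : Fin (s+1) => L.get ⟨i + k.val, by have := k.isLt; omega⟩) Finset.univ with hF
  have hinj : Function.Injective (fun k : Fin (s+1) => L.get ⟨i + k.val, by have := k.isLt; omega⟩) := by
    intro k1 k2 h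
    have := (hnd.get_inj_iff).mp h
    simpa [Fin.ext_iff] using this
  have hcard : F.card = s + 1 := by
    rw [hF, Finset.card_image_of_injective _ hinj, Finset.card_univ, Fintype.card_fin]
  have hsub : (F : Set V) ⊆ {v : V | P v = P (L.get ⟨i, hi⟩)} := by
    intro v hv
    simp only [hF, Finset.coe_image, Set.mem_image] at hv
    obtain ⟨k, -, rfl⟩ := hv
    exact hall k
  have := Set.ncard_le_ncard hsub (Set.toFinite _)
  rw [Set.ncard_coe_finset, hcard] at this
  have := hsize (P (L.get ⟨i, hi⟩))
  omega

theorem parts_bound_Str (V : Type*) [Fintype V] (C : Type*)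
    (c : Sym2 V → C) (red : C) (t r m : ℕ) (P : V → Fin m)
    (hparts : ∀ i : Fin m, Set.ncard {v : V | P v = i} ≤ t - 1)
    (hred : ∀ u v : V, P u ≠ P v → c s(u, v) = red)
    (hno : ¬ HasMonoCopy (SGraph t r) c) :
    Fintype.card V ≤ 2 * t + r - 1 := by
  -- t = 0 : trivial monochromatic copy exists
  rcases Nat.eq_zero_or_pos t with rfl | ht
  · exact absurd ⟨⟨Fin.elim0, fun a => a.elim0⟩, red, fun a => a.elim0⟩ hno
  by_contra hcard
  push_neg at hcard
  have hcardV : 2 * t + r ≤ Fintype.card V := by omega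
  apply hno
  -- pick a center x
  have hne : Nonempty V := Fintype.card_pos_iff.mp (by omega)
  obtain ⟨x⟩ := hne
  set i := P x with hi
  set N : Finset V := Finset.univ.filter (fun v => P v ≠ i) with hN
  have hNcard : t + r + 1 ≤ N.card := by
    have hsplit : (Finset.univ.filter (fun v => P v = i)).card + N.card = Fintype.card V := by
      rw [hN, Finset.card_filter_add_card_filter_not]
      rfl
    have : Set.ncard {v : V | P v = i} = (Finset.univ.filter (fun v => P v = i)).card := by
      rw [← Set.ncard_coe_finset]
      congr 1
      ext v; simp
    have := hparts i
    omega
  -- sorted list of N by part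
  set L : List V := N.toList.mergeSort (fun u v => decide ((P u : ℕ) ≤ (P v : ℕ))) with hL
  have hperm : L.Perm N.toList := List.mergeSort_perm _ _
  have hLlen : L.length = N.card := by rw [hperm.length_eq, Finset.length_toList]
  have hLnd : L.Nodup := hperm.nodup_iff.mpr (Finset.nodup_toList N)
  have hLsorted : L.Pairwise fun u v => (P u : ℕ) ≤ (P v : ℕ) := by
    have := List.pairwise_mergeSort (le := fun u v => decide ((P u : ℕ) ≤ (P v : ℕ)))
      (fun a b c hab hbc => by simp only [decide_eq_true_eq] at hab hbc ⊢; omega)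
      (fun a b => by simp only [Bool.or_eq_true, decide_eq_true_eq]; omega) N.toList
    rw [← hL] at this
    exact this.imp (fun h => by simpa using h)
  have hLmem : ∀ (k : ℕ) (hk : k < L.length), P (L.get ⟨k, hk⟩) ≠ i := by
    intro k hk
    have : L.get ⟨k, hk⟩ ∈ N := by
      rw [← Finset.mem_toList, ← hperm.mem_iff]
      exact L.get_mem _
    simpa [hN] using this
  -- the index function
  set r' := min r ((t-1)/2) with hr'
  have hr'le : 2 * r' ≤ t - 1 := by omega
  set g : ℕ → ℕ := fun a =>
    if a ≤ 2 * r' then (if a % 2 = 1 then a / 2 else t - 2 + a / 2) else a - (r' + 1) with hg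
  have hglt : ∀ a : ℕ, a < t → a ≠ 0 → g a < L.length := by
    intro a h1 h2
    rw [hLlen]
    simp only [hg]
    split_ifs <;> omega
  have hginj : ∀ a b : ℕ, a < t → a ≠ 0 → b < t → b ≠ 0 → g a = g b → a = b := by
    intro a b ha ha0 hb hb0 h
    simp only [hg] at h
    split_ifs at h <;> omega
  set f : Fin t → V := fun a =>
    if h : a.val = 0 then x else L.get ⟨g a.val, hglt a.val a.isLt h⟩ with hf
  have hfinj : Function.Injective f := by
    intro a b hab
    simp only [hf] at hab
    split_ifs at hab with h1 h2 h2
    · exact Fin.ext (h1.trans h2.symm)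
    · exact absurd hab.symm (fun h => hLmem _ _ (by rw [h]))
    · exact absurd hab (fun h => hLmem _ _ (by rw [h]))
    · have := (hLnd.get_inj_iff).mp hab
      exact Fin.ext (hginj _ _ a.isLt h1 b.isLt h2 (by simpa [Fin.ext_iff] using this))
  refine ⟨⟨f, hfinj⟩, red, ?_⟩
  intro a b hab
  rw [SGraph, SimpleGraph.fromRel_adj] at hab
  obtain ⟨hne, hrel⟩ := hab
  apply hred
  -- suffices : P (f a) ≠ P (f b)
  have key : ∀ a b : Fin t, a ≠ b →
      (a.val = 0 ∨ (b.val = a.val + 1 ∧ a.val % 2 = 1 ∧ b.val ≤ 2 * r)) →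
      P (f a) ≠ P (f b) := by
    intro a b hab hrel
    rcases hrel with h0 | ⟨hsucc, hodd, hle⟩
    · -- a is the center
      have hb0 : b.val ≠ 0 := fun h => hab (Fin.ext (h0.trans h.symm))
      simp only [hf, dif_pos h0, dif_neg hb0]
      exact fun h => hLmem _ _ (h.symm.trans hi.symm)
    · -- matching edge
      have ha0 : a.val ≠ 0 := by omega
      have hb0 : b.val ≠ 0 := by omega
      simp only [hf, dif_neg ha0, dif_neg hb0]
      have hbt : b.val < t := b.isLt
      have hble : b.val ≤ 2 * r' := by omega
      have hga : g a.val = a.val / 2 := by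
        simp only [hg]; rw [if_pos (by omega), if_pos hodd]
      have hgb : g b.val = t - 2 + b.val / 2 := by
        simp only [hg]; rw [if_pos hble, if_neg (by omega)]
      apply sorted_parts_ne P L hLsorted hLnd (t-1) hparts
      omega
  rcases hrel with h | h
  · exact key a b hne h
  · exact (key b a hne.symm h).symm
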